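/- Suppose m ≥ 4 and n ≥ 12. Then there is no Condorcet extension that satisfies participation. -/

import Mathlib

open scoped Classical

/-- A preference profile: a nonempty electorate of voters, each voter in the
electorate having a strict linear preference order over the alternatives. -/
structure Profile (V A : Type*) where
  electorate : Finset V
  nonempty : electorate.Nonempty
  pref : ∀ i ∈ electorate, A → A → Prop
  isSTO : ∀ i (hi : i ∈ electorate), IsStrictTotalOrder A (pref i hi)

namespace Profile

variable {V A : Type*}

/-- The profile `R - i` obtained by removing voter `i` from the electorate. -/
def erase [DecidableEq V] (R : Profile V A) (i : V)
    (h : (R.electorate.erase i).Nonempty) : Profile V A where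
  electorate := R.electorate.erase i
  nonempty := h
  pref := fun j hj => R.pref j (Finset.mem_of_mem_erase hj)
  isSTO := fun j hj => R.isSTO j (Finset.mem_of_mem_erase hj)

end Profile

/-- The majority margin g_R(x,y). -/
noncomputable def margin {V A : Type*} (R : Profile V A) (x y : A) : ℤ :=
  ((R.electorate.attach.filter (fun i => R.pref i.1 i.2 x y)).card : ℤ) -
  ((R.electorate.attach.filter (fun i => R.pref i.1 i.2 y x)).card : ℤ)

/-- `x` is a Condorcet winner of `R` if it beats every other alternative. -/
def IsCondorcetWinner {V A : Type*} (R : Profile V A) (x : A) : Prop :=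
  ∀ y, y ≠ x → 0 < margin R x y

/-- A voting rule is a Condorcet extension if it selects the Condorcet winner
whenever one exists. -/
def CondorcetExtension {V A : Type*} (f : Profile V A → A) : Prop :=
  ∀ R x, IsCondorcetWinner R x → f R = x

/-- Participation: every voter weakly prefers the outcome with her vote to
the outcome without it. -/
def Participation {V A : Type*} [DecidableEq V] (f : Profile V A → A) : Prop :=
  ∀ (R : Profile V A) (i : V) (hi : i ∈ R.electorate)
    (h : (R.electorate.erase i).Nonempty),
    f R = f (R.erase i h) ∨ R.pref i hi (f R) (f (R.erase i h))

/-- `x` is a maximin winner of `R`. -/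
noncomputable def IsMaximinWinner {V A : Type*} [Fintype A] [DecidableEq A]
    (R : Profile V A) (x : A) : Prop :=
  ∀ z : A,
    (Finset.univ.erase z).inf (fun y => (margin R z y : WithTop ℤ)) ≤
    (Finset.univ.erase x).inf (fun y => (margin R x y : WithTop ℤ))

def MaximinExtension {V A : Type*} [Fintype A] [DecidableEq A]
    (f : Profile V A → A) : Prop :=
  ∀ R, IsMaximinWinner R (f R)

/-- The Kemeny score of a ranking `K` for a profile `R`: the total pairwise
agreement of `K` with voters' preferences. -/
noncomputable def kemenyScore {V A : Type*} [Fintype A] (R : Profile V A)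
    (K : A → A → Prop) : ℕ :=
  ∑ i ∈ R.electorate.attach,
    ((Finset.univ : Finset (A × A)).filter
      (fun p => K p.1 p.2 ∧ R.pref i.1 i.2 p.1 p.2)).card

/-- `x` is a Kemeny winner: it is top-ranked in some Kemeny ranking. -/
def IsKemenyWinner {V A : Type*} [Fintype A] (R : Profile V A) (x : A) : Prop :=
  ∃ K : A → A → Prop, IsStrictTotalOrder A K ∧
    (∀ K' : A → A → Prop, IsStrictTotalOrder A K' →
      kemenyScore R K' ≤ kemenyScore R K) ∧
    (∀ y, y ≠ x → K x y)

def KemenyExtension {V A : Type*} [Fintype A] (f : Profile V A → A) : Prop :=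
  ∀ R, IsKemenyWinner R (f R)

/-- A dominant set: a nonempty set whose members all beat all non-members. -/
def IsDominantSet {V A : Type*} [Fintype A] (R : Profile V A) (B : Finset A) : Prop :=
  B.Nonempty ∧ ∀ a ∈ B, ∀ b ∉ B, 0 < margin R a b

/-- `x` is in the top cycle (the minimal dominant set) of `R`. -/
def InTopCycle {V A : Type*} [Fintype A] (R : Profile V A) (x : A) : Prop :=
  ∀ B : Finset A, IsDominantSet R B → x ∈ B

/-- Set-valued notions: maximum and minimum of a set w.r.t. a strict order. -/
def IsMaxOf {A : Type*} (r : A → A → Prop) (S : Finset A) (x : A) : Prop :=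
  x ∈ S ∧ ∀ y ∈ S, y = x ∨ r x y

def IsMinOf {A : Type*} (r : A → A → Prop) (S : Finset A) (x : A) : Prop :=
  x ∈ S ∧ ∀ y ∈ S, y = x ∨ r y x

def SetCondorcetExtension {V A : Type*} [DecidableEq A]
    (F : Profile V A → Finset A) : Prop :=
  ∀ R x, IsCondorcetWinner R x → F R = {x}

/-- Optimistic participation for set-valued rules. -/
def OptimisticParticipation {V A : Type*} [DecidableEq V]
    (F : Profile V A → Finset A) : Prop :=
  ∀ (R : Profile V A) (i : V) (hi : i ∈ R.electorate)
    (h : (R.electorate.erase i).Nonempty) (x y : A),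
    IsMaxOf (R.pref i hi) (F R) x → IsMaxOf (R.pref i hi) (F (R.erase i h)) y →
    x = y ∨ R.pref i hi x y

/-- Pessimistic participation for set-valued rules. -/
def PessimisticParticipation {V A : Type*} [DecidableEq V]
    (F : Profile V A → Finset A) : Prop :=
  ∀ (R : Profile V A) (i : V) (hi : i ∈ R.electorate)
    (h : (R.electorate.erase i).Nonempty) (x y : A),
    IsMinOf (R.pref i hi) (F R) x → IsMinOf (R.pref i hi) (F (R.erase i h)) y →
    x = y ∨ R.pref i hi x y

/-- A lottery over the alternatives. -/
structure Lottery (A : Type*) [Fintype A] where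
  prob : A → ℝ
  nonneg : ∀ x, 0 ≤ prob x
  sum_one : ∑ x, prob x = 1

/-- Stochastic dominance: `p` is weakly SD-preferred to `q` w.r.t. `r`. -/
noncomputable def SDPref {A : Type*} [Fintype A] (r : A → A → Prop)
    (p q : Lottery A) : Prop :=
  ∀ x : A,
    ∑ y ∈ Finset.univ.filter (fun y => y = x ∨ r y x), q.prob y ≤
    ∑ y ∈ Finset.univ.filter (fun y => y = x ∨ r y x), p.prob y

def ProbCondorcetExtension {V A : Type*} [Fintype A]
    (f : Profile V A → Lottery A) : Prop :=
  ∀ R x, IsCondorcetWinner R x → (f R).prob x = 1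

def StrongSDParticipation {V A : Type*} [DecidableEq V] [Fintype A]
    (f : Profile V A → Lottery A) : Prop :=
  ∀ (R : Profile V A) (i : V) (hi : i ∈ R.electorate)
    (h : (R.electorate.erase i).Nonempty),
    SDPref (R.pref i hi) (f R) (f (R.erase i h))

section Machinery
namespace NS
open Finset

variable {V A : Type*} [DecidableEq V] [DecidableEq A]

def Q : Fin 13 → Fin 4 → ℕ := ![![1,2,3,0], ![0,2,3,1], ![0,1,3,2], ![0,1,2,3], ![3,1,2,0], ![3,0,2,1], ![3,0,1,2], ![2,0,1,3], ![2,3,1,0], ![2,3,0,1], ![1,3,0,2], ![1,2,0,3], ![1,3,2,0]]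

lemma Qlt4 : ∀ j k, Q j k < 4 := by decide
lemma Qinj : ∀ j, Function.Injective (Q j) := by decide

def score (enc : A → ℕ) (a : Fin 4 → A) (q : Fin 4 → ℕ) (x : A) : ℕ :=
  if x = a 0 then q 0 else if x = a 1 then q 1 else if x = a 2 then q 2
  else if x = a 3 then q 3 else 4 + enc x

def prefR (enc : A → ℕ) (a : Fin 4 → A) (q : Fin 4 → ℕ) : A → A → Prop :=
  fun x y => score enc a q x < score enc a q y

variable {enc : A → ℕ} {a : Fin 4 → A}

lemma score_a (ha : Function.Injective a) (q : Fin 4 → ℕ) (k : Fin 4) :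
    score enc a q (a k) = q k := by
  fin_cases k <;> simp [score, ha.eq_iff]

lemma score_notin (q : Fin 4 → ℕ) {x : A} (hx : ∀ k, x ≠ a k) :
    score enc a q x = 4 + enc x := by
  simp [score, hx 0, hx 1, hx 2, hx 3]

lemma score_inj (henc : Function.Injective enc) (ha : Function.Injective a)
    {q : Fin 4 → ℕ} (hq4 : ∀ k, q k < 4) (hqi : Function.Injective q) :
    Function.Injective (score enc a q) := by
  have key : ∀ x : A, (∃ k, x = a k) ∨ score enc a q x = 4 + enc x := by
    intro x
    by_cases h : ∃ k, x = a k
    · exact Or.inl h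
    · push_neg at h
      exact Or.inr (score_notin q h)
  intro x y hxy
  rcases key x with ⟨k, rfl⟩ | hx
  · rcases key y with ⟨l, rfl⟩ | hy
    · rw [score_a ha, score_a ha] at hxy
      exact congrArg a (hqi hxy)
    · rw [score_a ha, hy] at hxy
      exact absurd hxy (by have := hq4 k; omega)
  · rcases key y with ⟨l, rfl⟩ | hy
    · rw [score_a ha, hx] at hxy
      exact absurd hxy (by have := hq4 l; omega)
    · rw [hx, hy] at hxy
      exact henc (by omega)
lemma score_a_lt (ha : Function.Injective a) {q : Fin 4 → ℕ} (hq4 : ∀ k, q k < 4)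
    {x : A} (hx : ∀ k, x ≠ a k) (k : Fin 4) :
    score enc a q (a k) < score enc a q x := by
  rw [score_a ha, score_notin q hx]
  have := hq4 k; omega

lemma prefR_sto (henc : Function.Injective enc) (ha : Function.Injective a)
    {q : Fin 4 → ℕ} (hq4 : ∀ k, q k < 4) (hqi : Function.Injective q) :
    IsStrictTotalOrder A (prefR enc a q) := by
  exact { trichotomous := fun x y h1 h2 => by
            rcases lt_trichotomy (score enc a q x) (score enc a q y) with h | h | h
            · exact absurd h h1
            · exact score_inj henc ha hq4 hqi h
            · exact absurd h h2,
          irrefl := fun x => lt_irrefl _,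
          trans := fun x y z => lt_trans }

end NS
end Machinery

section Machinery2
namespace NS
open Finset

variable {V A : Type*} [DecidableEq V] [DecidableEq A]
variable {enc : A → ℕ} {a : Fin 4 → A}

lemma prefR_a (ha : Function.Injective a) (q : Fin 4 → ℕ) (x y : Fin 4) :
    prefR enc a q (a x) (a y) ↔ q x < q y := by
  unfold prefR
  rw [score_a ha, score_a ha]

lemma profile_ext {R S : Profile V A} (he : R.electorate = S.electorate)
    (hp : ∀ i (hi : i ∈ R.electorate) (hi' : i ∈ S.electorate),
      R.pref i hi = S.pref i hi') : R = S := by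
  obtain ⟨e1, n1, p1, s1⟩ := R
  obtain ⟨e2, n2, p2, s2⟩ := S
  dsimp at he hp
  subst he
  have : p1 = p2 := by
    funext i hi
    exact hp i hi hi
  subst this
  rfl

/-- A profile realizes the count vector `c` over the 13 preference types. -/
def Rep (enc : A → ℕ) (a : Fin 4 → A) (c : Fin 13 → ℕ) (R : Profile V A) : Prop :=
  ∃ t : V → Fin 13,
    (∀ i (hi : i ∈ R.electorate), R.pref i hi = prefR enc a (Q (t i))) ∧
    (∀ j, (R.electorate.filter (fun i => t i = j)).card = c j)

lemma card_attach_filter (s : Finset V) (p : V → Prop) :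
    (s.attach.filter (fun i => p i.1)).card = (s.filter p).card := by
  rw [← Finset.card_map ⟨Subtype.val, Subtype.val_injective⟩]
  congr 1
  ext x
  simp only [Finset.mem_map, Finset.mem_filter, Finset.mem_attach, true_and,
    Function.Embedding.coeFn_mk]
  constructor
  · rintro ⟨⟨a, has⟩, hpa, rfl⟩
    exact ⟨has, hpa⟩
  · rintro ⟨hxs, hpx⟩
    exact ⟨⟨x, hxs⟩, hpx, rfl⟩

lemma card_filter_mem (s : Finset V) (t : V → Fin 13) (u : Finset (Fin 13)) :
    (s.filter (fun i => t i ∈ u)).card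
      = ∑ j ∈ u, (s.filter (fun i => t i = j)).card := by
  induction u using Finset.induction_on with
  | empty => simp
  | insert b u' hb ih =>
    have : (s.filter (fun i => t i ∈ insert b u'))
        = (s.filter (fun i => t i = b)) ∪ (s.filter (fun i => t i ∈ u')) := by
      ext x
      simp [Finset.mem_insert, or_comm]
      tauto
    rw [this, Finset.card_union_of_disjoint, Finset.sum_insert hb, ih]
    rw [Finset.disjoint_filter]
    intro x _ hxb hxu
    rw [hxb] at hxu
    exact hb hxu

lemma card_filter_comp (s : Finset V) (t : V → Fin 13) (P : Fin 13 → Prop) :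
    (s.filter (fun i => P (t i))).card
      = ∑ j ∈ univ.filter P, (s.filter (fun i => t i = j)).card := by
  have h : s.filter (fun i => P (t i)) = s.filter (fun i => t i ∈ univ.filter P) := by
    apply Finset.filter_congr
    intro i _
    simp
  rw [h, card_filter_mem]

lemma rep_card {c : Fin 13 → ℕ} {R : Profile V A} (hR : Rep enc a c R) :
    R.electorate.card = ∑ j, c j := by
  obtain ⟨t, _, hc⟩ := hR
  have h1 := card_filter_comp R.electorate t (fun _ => True)
  simp only [Finset.filter_true] at h1
  rw [h1]
  exact Finset.sum_congr rfl (fun j _ => hc j)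

lemma margin_filter {c : Fin 13 → ℕ} {R : Profile V A} (t : V → Fin 13)
    (hp : ∀ i (hi : i ∈ R.electorate), R.pref i hi = prefR enc a (Q (t i)))
    (hc : ∀ j, (R.electorate.filter (fun i => t i = j)).card = c j)
    (x y : A) (P : Fin 13 → Prop)
    (hP : ∀ j, prefR enc a (Q j) x y ↔ P j) :
    ((R.electorate.attach.filter (fun i => R.pref i.1 i.2 x y)).card : ℤ)
      = ∑ j ∈ univ.filter P, (c j : ℤ) := by
  have h1 : R.electorate.attach.filter (fun i => R.pref i.1 i.2 x y)
      = R.electorate.attach.filter (fun i => P (t i.1)) := by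
    apply Finset.filter_congr
    intro i _
    rw [hp i.1 i.2, hP (t i.1)]
  rw [h1, card_attach_filter R.electorate (fun v => P (t v)), card_filter_comp]
  push_cast
  exact Finset.sum_congr rfl (fun j _ => by rw [hc j])

lemma margin_count (ha : Function.Injective a) {c : Fin 13 → ℕ} {R : Profile V A}
    (hR : Rep enc a c R) (x y : Fin 4) (hxy : x ≠ y) :
    margin R (a x) (a y)
      = ∑ j : Fin 13, (if Q j x < Q j y then (c j : ℤ) else -(c j)) := by
  obtain ⟨t, hp, hc⟩ := hR
  have hne : ∀ j : Fin 13, Q j x ≠ Q j y := fun j h => hxy (Qinj j h)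
  unfold margin
  rw [margin_filter t hp hc (a x) (a y) (fun j => Q j x < Q j y)
      (fun j => prefR_a ha (Q j) x y),
    margin_filter t hp hc (a y) (a x) (fun j => ¬ (Q j x < Q j y))
      (fun j => by rw [prefR_a ha (Q j) y x]; have := hne j; omega)]
  rw [Finset.sum_filter, Finset.sum_filter, ← Finset.sum_sub_distrib]
  apply Finset.sum_congr rfl
  intro j _
  split_ifs <;> ring

lemma margin_extra (ha : Function.Injective a) {c : Fin 13 → ℕ} {R : Profile V A}
    (hR : Rep enc a c R) {z : A} (hz : ∀ k, z ≠ a k) (x : Fin 4) :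
    margin R (a x) z = ((∑ j, c j : ℕ) : ℤ) := by
  obtain ⟨t, hp, hc⟩ := hR
  have hRc : Rep enc a c R := ⟨t, hp, hc⟩
  unfold margin
  rw [margin_filter t hp hc (a x) z (fun j => True)
      (fun j => by
        simp only [iff_true]
        exact score_a_lt ha (Qlt4 j) hz x),
    margin_filter t hp hc z (a x) (fun j => False)
      (fun j => by
        simp only [iff_false]
        intro hcon
        exact absurd (lt_trans hcon (score_a_lt ha (Qlt4 j) hz x))
          (lt_irrefl _))]
  simp only [Finset.filter_true, Finset.filter_false, Finset.sum_empty, sub_zero,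
    Finset.filter_true_of_mem]
  push_cast
  rfl

lemma cond_count (ha : Function.Injective a) {c : Fin 13 → ℕ} {R : Profile V A}
    (hR : Rep enc a c R) (w : Fin 4)
    (hpos : ∀ x : Fin 4, x ≠ w →
      0 < ∑ j : Fin 13, (if Q j w < Q j x then (c j : ℤ) else -(c j)))
    (htot : 0 < ∑ j, c j) : IsCondorcetWinner R (a w) := by
  intro y hy
  by_cases hspec : ∃ k, y = a k
  · obtain ⟨k, rfl⟩ := hspec
    have hkw : k ≠ w := fun h => hy (by rw [h])
    rw [margin_count ha hR w k (Ne.symm hkw)]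
    exact hpos k hkw
  · push_neg at hspec
    rw [margin_extra ha hR hspec w]
    exact_mod_cast htot

end NS
end Machinery2

section Machinery3
namespace NS
open Finset

set_option linter.unusedSectionVars false

variable {V A : Type*} [DecidableEq V] [DecidableEq A]
variable {enc : A → ℕ} {a : Fin 4 → A}

lemma rep_erase {c c' : Fin 13 → ℕ} {R : Profile V A} (hR : Rep enc a c R)
    (j : Fin 13) (hcc' : ∀ k, c k = if k = j then c' k + 1 else c' k)
    (htot : 2 ≤ ∑ k, c k) :
    ∃ (i : V) (hi : i ∈ R.electorate) (h : (R.electorate.erase i).Nonempty),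
      R.pref i hi = prefR enc a (Q j) ∧ Rep enc a c' (R.erase i h) := by
  obtain ⟨t, hp, hc⟩ := hR
  have hRc : Rep enc a c R := ⟨t, hp, hc⟩
  have hcj : 0 < c j := by have := hcc' j; simp at this; omega
  have hne : (R.electorate.filter (fun i => t i = j)).Nonempty := by
    rw [← Finset.card_pos, hc j]; exact hcj
  obtain ⟨i, hi'⟩ := hne
  have hi : i ∈ R.electorate := (Finset.mem_filter.mp hi').1
  have hti : t i = j := (Finset.mem_filter.mp hi').2
  have hcard : R.electorate.card = ∑ k, c k := rep_card hRc
  have h : (R.electorate.erase i).Nonempty := by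
    rw [← Finset.card_pos, Finset.card_erase_of_mem hi, hcard]
    omega
  refine ⟨i, hi, h, by rw [hp i hi, hti], t, ?_, ?_⟩
  · intro x hx
    exact hp x (Finset.mem_of_mem_erase hx)
  · intro k
    show ((R.electorate.erase i).filter (fun x => t x = k)).card = c' k
    have hcomm : (R.electorate.erase i).filter (fun x => t x = k)
        = (R.electorate.filter (fun x => t x = k)).erase i := by
      ext x
      simp only [Finset.mem_filter, Finset.mem_erase]
      constructor
      · rintro ⟨⟨hxi, hxs⟩, hxk⟩
        exact ⟨hxi, hxs, hxk⟩
      · rintro ⟨hxi, hxs, hxk⟩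
        exact ⟨⟨hxi, hxs⟩, hxk⟩
    rw [hcomm]
    by_cases hk : k = j
    · subst hk
      rw [Finset.card_erase_of_mem hi', hc k]
      have := hcc' k; simp at this; omega
    · rw [Finset.erase_eq_of_notMem, hc k]
      · have := hcc' k; rw [if_neg hk] at this; omega
      · intro hmem
        exact hk (by rw [← (Finset.mem_filter.mp hmem).2, hti])

lemma rep_add [Fintype V] (henc : Function.Injective enc)
    (ha : Function.Injective a) {c c' : Fin 13 → ℕ} {R : Profile V A}
    (hR : Rep enc a c R) (j : Fin 13)
    (hcc' : ∀ k, c' k = if k = j then c k + 1 else c k)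
    (htot : ∑ k, c k < 12) (hV : 12 ≤ Fintype.card V) :
    ∃ (R' : Profile V A) (i : V) (hi : i ∈ R'.electorate)
      (h : (R'.electorate.erase i).Nonempty),
      R'.erase i h = R ∧ R'.pref i hi = prefR enc a (Q j) ∧ Rep enc a c' R' := by
  obtain ⟨t, hpr, hc⟩ := hR
  have hRc : Rep enc a c R := ⟨t, hpr, hc⟩
  obtain ⟨i, hi0⟩ : ∃ i, i ∉ R.electorate := by
    by_contra hcon
    push_neg at hcon
    have : R.electorate = Finset.univ := Finset.eq_univ_iff_forall.mpr hcon
    have hcard := rep_card hRc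
    rw [this, Finset.card_univ] at hcard
    omega
  refine ⟨⟨insert i R.electorate, ⟨i, Finset.mem_insert_self i _⟩,
    fun x hx => if hxi : x = i then prefR enc a (Q j)
      else R.pref x ((Finset.mem_insert.mp hx).resolve_left hxi),
    fun x hx => ?_⟩, i, Finset.mem_insert_self i _, ?_, ?_, ?_, ?_⟩
  · split
    · exact prefR_sto henc ha (Qlt4 j) (Qinj j)
    · exact R.isSTO x _
  · show ((insert i R.electorate).erase i).Nonempty
    rw [Finset.erase_insert hi0]
    exact R.nonempty
  · apply profile_ext
    · show (insert i R.electorate).erase i = R.electorate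
      exact Finset.erase_insert hi0
    · intro x hx hx'
      have hxi : x ≠ i := (Finset.mem_erase.mp hx).1
      show (if h2 : x = i then prefR enc a (Q j) else R.pref x hx') = R.pref x hx'
      rw [dif_neg hxi]
  · exact dif_pos rfl
  · refine ⟨Function.update t i j, ?_, ?_⟩
    · intro x hx
      show (if hxi : x = i then prefR enc a (Q j)
          else R.pref x ((Finset.mem_insert.mp hx).resolve_left hxi))
        = prefR enc a (Q (Function.update t i j x))
      by_cases hxi : x = i
      · subst hxi
        rw [dif_pos rfl, Function.update_self]
      · rw [dif_neg hxi, Function.update_of_ne hxi,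
          hpr x ((Finset.mem_insert.mp hx).resolve_left hxi)]
    · intro k
      show ((insert i R.electorate).filter
        (fun x => Function.update t i j x = k)).card = c' k
      have hfe : R.electorate.filter (fun x => Function.update t i j x = k)
          = R.electorate.filter (fun x => t x = k) := by
        apply Finset.filter_congr
        intro x hxs
        have hxne : x ≠ i := by
          intro hq
          rw [hq] at hxs
          exact hi0 hxs
        rw [Function.update_of_ne hxne]
      rw [Finset.filter_insert]
      by_cases hk : k = j
      · subst hk
        rw [if_pos (by rw [Function.update_self])]
        rw [Finset.card_insert_of_notMem
          (fun hmem => hi0 (Finset.mem_of_mem_filter _ hmem)), hfe, hc k]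
        have := hcc' k; simp at this; omega
      · rw [if_neg (by rw [Function.update_self]; exact fun h => hk h.symm)]
        rw [hfe, hc k]
        have := hcc' k; rw [if_neg hk] at this; omega

lemma nonempty_V [Fintype V] (hV : 12 ≤ Fintype.card V) : Nonempty V := by
  rw [← Fintype.card_pos_iff]
  omega

lemma sum_one {c : Fin 13 → ℕ} (h1 : ∑ k, c k = 1) :
    ∃ j, c j = 1 ∧ ∀ k, k ≠ j → c k = 0 := by
  obtain ⟨j, hj⟩ : ∃ j, 0 < c j := by
    by_contra hcon
    push_neg at hcon
    have : ∑ k, c k = 0 := Finset.sum_eq_zero (fun k _ => by have := hcon k; omega)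
    omega
  have hle : c j ≤ 1 := h1 ▸ Finset.single_le_sum (fun k _ => Nat.zero_le _)
    (Finset.mem_univ j)
  refine ⟨j, by omega, fun k hk => ?_⟩
  have hsub : c j + c k ≤ ∑ m, c m := by
    rw [← Finset.sum_pair (Ne.symm hk)]
    exact Finset.sum_le_sum_of_subset (Finset.subset_univ _)
  omega

lemma rep_exists [Fintype V] (henc : Function.Injective enc)
    (ha : Function.Injective a) (hV : 12 ≤ Fintype.card V) :
    ∀ n, 1 ≤ n → n ≤ 12 → ∀ c : Fin 13 → ℕ, (∑ j, c j) = n →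
      ∃ R : Profile V A, Rep enc a c R := by
  intro n h1
  induction n, h1 using Nat.le_induction with
  | base =>
    intro _ c hsum
    obtain ⟨j, hj1, hj0⟩ := sum_one hsum
    obtain ⟨i₀⟩ := nonempty_V (V := V) hV
    refine ⟨⟨{i₀}, Finset.singleton_nonempty i₀, fun _ _ => prefR enc a (Q j),
      fun _ _ => prefR_sto henc ha (Qlt4 j) (Qinj j)⟩, fun _ => j, fun _ _ => rfl, ?_⟩
    intro k
    show (({i₀} : Finset V).filter (fun _ => j = k)).card = c k
    by_cases hk : k = j
    · subst hk
      rw [Finset.filter_true_of_mem (fun _ _ => rfl), Finset.card_singleton, hj1]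
    · rw [Finset.filter_false_of_mem (fun _ _ => fun h => hk h.symm)]
      rw [Finset.card_empty, hj0 k hk]
  | succ n hn ih =>
    intro hle c hsum
    obtain ⟨j, hj⟩ : ∃ j, 0 < c j := by
      by_contra hcon
      push_neg at hcon
      have : ∑ k, c k = 0 := Finset.sum_eq_zero (fun k _ => by have := hcon k; omega)
      omega
    set c'' : Fin 13 → ℕ := fun k => if k = j then c j - 1 else c k with hc''
    have hcc' : ∀ k, c k = if k = j then c'' k + 1 else c'' k := by
      intro k
      by_cases hk : k = j
      · subst hk; simp [hc'']; omega
      · simp [hc'', hk]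
    have hsum'' : ∑ k, c'' k = n := by
      have h1 : ∑ k, c k = c j + ∑ k ∈ univ.erase j, c k :=
        (Finset.add_sum_erase univ c (Finset.mem_univ j)).symm
      have h2 : ∑ k, c'' k = c'' j + ∑ k ∈ univ.erase j, c'' k :=
        (Finset.add_sum_erase univ c'' (Finset.mem_univ j)).symm
      have h3 : ∑ k ∈ univ.erase j, c'' k = ∑ k ∈ univ.erase j, c k :=
        Finset.sum_congr rfl (fun k hk => by
          simp only [hc'']
          rw [if_neg (Finset.ne_of_mem_erase hk)])
      have h4 : c'' j = c j - 1 := by simp [hc'']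
      omega
    obtain ⟨R, hR⟩ := ih (by omega) c'' hsum''
    obtain ⟨R', _, _, _, _, _, hRep⟩ := rep_add henc ha hR j hcc' (by omega) hV
    exact ⟨R', hRep⟩

end NS
end Machinery3

section Machinery4
namespace NS
open Finset

set_option linter.unusedSectionVars false

variable {V A : Type*} [DecidableEq V] [DecidableEq A]
variable {enc : A → ℕ} {a : Fin 4 → A}

def wtop : Fin 13 → Fin 4 := ![3,0,0,0,3,1,1,1,3,2,2,2,3]

lemma wtop_lt : ∀ j x, x ≠ wtop j → Q j (wtop j) < Q j x := by decide

lemma f_range [Fintype V] (henc : Function.Injective enc)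
    (ha : Function.Injective a) (hV : 12 ≤ Fintype.card V)
    {f : Profile V A → A} (hf : CondorcetExtension f) (hpa : Participation f) :
    ∀ n, 1 ≤ n → ∀ (c : Fin 13 → ℕ) (R : Profile V A), (∑ j, c j) = n →
      Rep enc a c R → ∃ w, f R = a w := by
  intro n h1
  induction n, h1 using Nat.le_induction with
  | base =>
    intro c R hsum hR
    obtain ⟨j, hj1, hj0⟩ := sum_one hsum
    have hpos : ∀ x : Fin 4, x ≠ wtop j →
        0 < ∑ k, (if Q k (wtop j) < Q k x then (c k : ℤ) else -(c k)) := by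
      intro x hx
      have he : ∀ k : Fin 13, (if Q k (wtop j) < Q k x then (c k : ℤ) else -(c k))
          = (if k = j then (if Q k (wtop j) < Q k x then (1 : ℤ) else -1) else 0) := by
        intro k
        by_cases hk : k = j
        · subst hk; rw [hj1]; simp
        · rw [hj0 k hk]; simp [hk]
      rw [Finset.sum_congr rfl (fun k _ => he k), Finset.sum_ite_eq' univ j _]
      simp only [Finset.mem_univ, if_true]
      rw [if_pos (wtop_lt j x hx)]
      norm_num
    exact ⟨wtop j, hf R (a (wtop j)) (cond_count ha hR (wtop j) hpos (by omega))⟩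
  | succ n hn ih =>
    intro c R hsum hR
    by_contra hno
    push_neg at hno
    obtain ⟨j, hj⟩ : ∃ j, 0 < c j := by
      by_contra hcon
      push_neg at hcon
      have : ∑ k, c k = 0 := Finset.sum_eq_zero (fun k _ => by have := hcon k; omega)
      omega
    set c'' : Fin 13 → ℕ := fun k => if k = j then c j - 1 else c k with hc''
    have hcc' : ∀ k, c k = if k = j then c'' k + 1 else c'' k := by
      intro k
      by_cases hk : k = j
      · subst hk; simp [hc'']; omega
      · simp [hc'', hk]
    have hsum'' : ∑ k, c'' k = n := by
      have h1 : ∑ k, c k = c j + ∑ k ∈ univ.erase j, c k :=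
        (Finset.add_sum_erase univ c (Finset.mem_univ j)).symm
      have h2 : ∑ k, c'' k = c'' j + ∑ k ∈ univ.erase j, c'' k :=
        (Finset.add_sum_erase univ c'' (Finset.mem_univ j)).symm
      have h3 : ∑ k ∈ univ.erase j, c'' k = ∑ k ∈ univ.erase j, c k :=
        Finset.sum_congr rfl (fun k hk => by
          simp only [hc'']
          rw [if_neg (Finset.ne_of_mem_erase hk)])
      have h4 : c'' j = c j - 1 := by simp [hc'']
      omega
    obtain ⟨i, hi, h, hpref, hR2⟩ := rep_erase hR j hcc' (by omega)
    obtain ⟨w, hw⟩ := ih c'' (R.erase i h) hsum'' hR2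
    rcases hpa R i hi h with h1 | h2
    · exact hno w (h1.trans hw)
    · rw [hpref, hw] at h2
      unfold prefR at h2
      rw [score_a ha] at h2
      rw [score_notin (Q j) (fun k he => hno k he)] at h2
      have := Qlt4 j w
      omega

end NS
end Machinery4

/-- For `m ≥ 4` alternatives and `n ≥ 12` voters, there is no
Condorcet extension satisfying participation. -/
theorem stmt5_no_condorcet_extension_with_participation
    (V A : Type*) [Fintype V] [DecidableEq V] [Fintype A] [DecidableEq A]
    (hm : 4 ≤ Fintype.card A) (hn : 12 ≤ Fintype.card V) :
    ¬ ∃ f : Profile V A → A, CondorcetExtension f ∧ Participation f := by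
  rintro ⟨f, hf, hp⟩
  obtain ⟨enc, henc⟩ : ∃ enc : A → ℕ, Function.Injective enc :=
    ⟨fun x => ((Fintype.equivFin A) x : ℕ),
      fun x y hxy => (Fintype.equivFin A).injective (Fin.val_injective hxy)⟩
  obtain ⟨a, ha⟩ : ∃ a : Fin 4 → A, Function.Injective a := by
    refine ⟨fun k => (Fintype.equivFin A).symm ⟨k.1, lt_of_lt_of_le k.isLt hm⟩, ?_⟩
    intro x y hxy
    have h2 := (Fintype.equivFin A).symm.injective hxy
    injection h2 with h3
    exact Fin.ext h3
  have hrange : ∀ (c : Fin 13 → ℕ) (R : Profile V A), 1 ≤ ∑ j, c j →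
      NS.Rep enc a c R → ∃ w, f R = a w :=
    fun c R h1 hR => NS.f_range henc ha hn hf hp (∑ j, c j) h1 c R rfl hR
  have L0 : ∀ R : Profile V A, NS.Rep enc a (![2,1,0,3,0,0,0,0,0,1,0,0,2] : Fin 13 → ℕ) R → f R ≠ a 0 := by
    intro R hR hv
    have hw := hf R (a 3) (NS.cond_count ha hR 3 (by decide) (by decide))
    have hvw : a (0 : Fin 4) = a 3 := by rw [← hv, hw]
    exact absurd (ha hvw) (by decide)
  have L1 : ∀ R : Profile V A, NS.Rep enc a (![2,0,0,3,0,0,0,0,0,1,0,0,2] : Fin 13 → ℕ) R → f R ≠ a 0 := by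
    intro R hR hv
    obtain ⟨R', i, hi, h, heq, hpref, hR'⟩ := NS.rep_add (c' := (![2,1,0,3,0,0,0,0,0,1,0,0,2] : Fin 13 → ℕ)) henc ha hR 1 (by decide) (by decide) hn
    obtain ⟨w, hw⟩ := hrange (![2,1,0,3,0,0,0,0,0,1,0,0,2] : Fin 13 → ℕ) R' (by decide) hR'
    have hd : w = 0 ∨ NS.Q 1 w < NS.Q 1 0 := by
      rcases hp R' i hi h with h1 | h2
      · left
        apply ha
        rw [← hw, h1, heq, hv]
      · right
        rw [hpref, heq, hv, hw] at h2
        exact (NS.prefR_a ha (NS.Q 1) w 0).mp h2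
    fin_cases w
    · exact L0 R' hR' hw
    · exact absurd hd (by decide)
    · exact absurd hd (by decide)
    · exact absurd hd (by decide)
  have L2 : ∀ R : Profile V A, NS.Rep enc a (![2,0,0,3,0,1,0,0,0,1,0,0,2] : Fin 13 → ℕ) R → f R ≠ a 1 := by
    intro R hR hv
    have hw := hf R (a 3) (NS.cond_count ha hR 3 (by decide) (by decide))
    have hvw : a (1 : Fin 4) = a 3 := by rw [← hv, hw]
    exact absurd (ha hvw) (by decide)
  have L3 : ∀ R : Profile V A, NS.Rep enc a (![2,0,0,3,0,0,0,0,0,1,0,0,2] : Fin 13 → ℕ) R → f R ≠ a 1 := by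
    intro R hR hv
    obtain ⟨R', i, hi, h, heq, hpref, hR'⟩ := NS.rep_add (c' := (![2,0,0,3,0,1,0,0,0,1,0,0,2] : Fin 13 → ℕ)) henc ha hR 5 (by decide) (by decide) hn
    obtain ⟨w, hw⟩ := hrange (![2,0,0,3,0,1,0,0,0,1,0,0,2] : Fin 13 → ℕ) R' (by decide) hR'
    have hd : w = 1 ∨ NS.Q 5 w < NS.Q 5 1 := by
      rcases hp R' i hi h with h1 | h2
      · left
        apply ha
        rw [← hw, h1, heq, hv]
      · right
        rw [hpref, heq, hv, hw] at h2
        exact (NS.prefR_a ha (NS.Q 5) w 1).mp h2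
    fin_cases w
    · exact absurd hd (by decide)
    · exact L2 R' hR' hw
    · exact absurd hd (by decide)
    · exact absurd hd (by decide)
  have L4 : ∀ R : Profile V A, NS.Rep enc a (![2,0,0,3,0,0,0,0,0,2,0,0,2] : Fin 13 → ℕ) R → f R ≠ a 0 := by
    intro R hR hv
    obtain ⟨i, hi, h, hpref, hR2⟩ := NS.rep_erase (c' := (![2,0,0,3,0,0,0,0,0,1,0,0,2] : Fin 13 → ℕ)) hR 9 (by decide) (by decide)
    obtain ⟨w, hw⟩ := hrange (![2,0,0,3,0,0,0,0,0,1,0,0,2] : Fin 13 → ℕ) (R.erase i h) (by decide) hR2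
    have hd : w = 0 ∨ NS.Q 9 0 < NS.Q 9 w := by
      rcases hp R i hi h with h1 | h2
      · left
        apply ha
        rw [← hw, ← h1, hv]
      · right
        rw [hpref, hv, hw] at h2
        exact (NS.prefR_a ha (NS.Q 9) 0 w).mp h2
    fin_cases w
    · exact L1 (R.erase i h) hR2 hw
    · exact L3 (R.erase i h) hR2 hw
    · exact absurd hd (by decide)
    · exact absurd hd (by decide)
  have L5 : ∀ R : Profile V A, NS.Rep enc a (![2,0,0,3,0,0,0,0,0,2,0,0,2] : Fin 13 → ℕ) R → f R ≠ a 1 := by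
    intro R hR hv
    obtain ⟨i, hi, h, hpref, hR2⟩ := NS.rep_erase (c' := (![2,0,0,3,0,0,0,0,0,1,0,0,2] : Fin 13 → ℕ)) hR 9 (by decide) (by decide)
    obtain ⟨w, hw⟩ := hrange (![2,0,0,3,0,0,0,0,0,1,0,0,2] : Fin 13 → ℕ) (R.erase i h) (by decide) hR2
    have hd : w = 1 ∨ NS.Q 9 1 < NS.Q 9 w := by
      rcases hp R i hi h with h1 | h2
      · left
        apply ha
        rw [← hw, ← h1, hv]
      · right
        rw [hpref, hv, hw] at h2
        exact (NS.prefR_a ha (NS.Q 9) 1 w).mp h2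
    fin_cases w
    · exact absurd hd (by decide)
    · exact L3 (R.erase i h) hR2 hw
    · exact absurd hd (by decide)
    · exact absurd hd (by decide)
  have L6 : ∀ R : Profile V A, NS.Rep enc a (![2,0,0,3,0,0,0,0,0,3,0,0,2] : Fin 13 → ℕ) R → f R ≠ a 0 := by
    intro R hR hv
    obtain ⟨i, hi, h, hpref, hR2⟩ := NS.rep_erase (c' := (![2,0,0,3,0,0,0,0,0,2,0,0,2] : Fin 13 → ℕ)) hR 9 (by decide) (by decide)
    obtain ⟨w, hw⟩ := hrange (![2,0,0,3,0,0,0,0,0,2,0,0,2] : Fin 13 → ℕ) (R.erase i h) (by decide) hR2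
    have hd : w = 0 ∨ NS.Q 9 0 < NS.Q 9 w := by
      rcases hp R i hi h with h1 | h2
      · left
        apply ha
        rw [← hw, ← h1, hv]
      · right
        rw [hpref, hv, hw] at h2
        exact (NS.prefR_a ha (NS.Q 9) 0 w).mp h2
    fin_cases w
    · exact L4 (R.erase i h) hR2 hw
    · exact L5 (R.erase i h) hR2 hw
    · exact absurd hd (by decide)
    · exact absurd hd (by decide)
  have L7 : ∀ R : Profile V A, NS.Rep enc a (![2,0,0,3,0,0,1,0,0,3,0,0,2] : Fin 13 → ℕ) R → f R ≠ a 0 := by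
    intro R hR hv
    obtain ⟨i, hi, h, hpref, hR2⟩ := NS.rep_erase (c' := (![2,0,0,3,0,0,0,0,0,3,0,0,2] : Fin 13 → ℕ)) hR 6 (by decide) (by decide)
    obtain ⟨w, hw⟩ := hrange (![2,0,0,3,0,0,0,0,0,3,0,0,2] : Fin 13 → ℕ) (R.erase i h) (by decide) hR2
    have hd : w = 0 ∨ NS.Q 6 0 < NS.Q 6 w := by
      rcases hp R i hi h with h1 | h2
      · left
        apply ha
        rw [← hw, ← h1, hv]
      · right
        rw [hpref, hv, hw] at h2
        exact (NS.prefR_a ha (NS.Q 6) 0 w).mp h2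
    fin_cases w
    · exact L6 (R.erase i h) hR2 hw
    · exact absurd hd (by decide)
    · exact absurd hd (by decide)
    · exact absurd hd (by decide)
  have L8 : ∀ R : Profile V A, NS.Rep enc a (![2,0,0,3,0,0,2,0,0,3,0,0,2] : Fin 13 → ℕ) R → f R ≠ a 0 := by
    intro R hR hv
    obtain ⟨i, hi, h, hpref, hR2⟩ := NS.rep_erase (c' := (![2,0,0,3,0,0,1,0,0,3,0,0,2] : Fin 13 → ℕ)) hR 6 (by decide) (by decide)
    obtain ⟨w, hw⟩ := hrange (![2,0,0,3,0,0,1,0,0,3,0,0,2] : Fin 13 → ℕ) (R.erase i h) (by decide) hR2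
    have hd : w = 0 ∨ NS.Q 6 0 < NS.Q 6 w := by
      rcases hp R i hi h with h1 | h2
      · left
        apply ha
        rw [← hw, ← h1, hv]
      · right
        rw [hpref, hv, hw] at h2
        exact (NS.prefR_a ha (NS.Q 6) 0 w).mp h2
    fin_cases w
    · exact L7 (R.erase i h) hR2 hw
    · exact absurd hd (by decide)
    · exact absurd hd (by decide)
    · exact absurd hd (by decide)
  have L9 : ∀ R : Profile V A, NS.Rep enc a (![2,0,0,1,0,0,2,0,1,3,0,0,2] : Fin 13 → ℕ) R → f R ≠ a 3 := by
    intro R hR hv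
    have hw := hf R (a 2) (NS.cond_count ha hR 2 (by decide) (by decide))
    have hvw : a (3 : Fin 4) = a 2 := by rw [← hv, hw]
    exact absurd (ha hvw) (by decide)
  have L10 : ∀ R : Profile V A, NS.Rep enc a (![2,0,0,1,0,0,2,0,0,3,0,0,2] : Fin 13 → ℕ) R → f R ≠ a 3 := by
    intro R hR hv
    obtain ⟨R', i, hi, h, heq, hpref, hR'⟩ := NS.rep_add (c' := (![2,0,0,1,0,0,2,0,1,3,0,0,2] : Fin 13 → ℕ)) henc ha hR 8 (by decide) (by decide) hn
    obtain ⟨w, hw⟩ := hrange (![2,0,0,1,0,0,2,0,1,3,0,0,2] : Fin 13 → ℕ) R' (by decide) hR'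
    have hd : w = 3 ∨ NS.Q 8 w < NS.Q 8 3 := by
      rcases hp R' i hi h with h1 | h2
      · left
        apply ha
        rw [← hw, h1, heq, hv]
      · right
        rw [hpref, heq, hv, hw] at h2
        exact (NS.prefR_a ha (NS.Q 8) w 3).mp h2
    fin_cases w
    · exact absurd hd (by decide)
    · exact absurd hd (by decide)
    · exact absurd hd (by decide)
    · exact L9 R' hR' hw
  have L11 : ∀ R : Profile V A, NS.Rep enc a (![2,0,0,2,0,0,2,0,0,3,0,0,2] : Fin 13 → ℕ) R → f R ≠ a 3 := by
    intro R hR hv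
    obtain ⟨i, hi, h, hpref, hR2⟩ := NS.rep_erase (c' := (![2,0,0,1,0,0,2,0,0,3,0,0,2] : Fin 13 → ℕ)) hR 3 (by decide) (by decide)
    obtain ⟨w, hw⟩ := hrange (![2,0,0,1,0,0,2,0,0,3,0,0,2] : Fin 13 → ℕ) (R.erase i h) (by decide) hR2
    have hd : w = 3 ∨ NS.Q 3 3 < NS.Q 3 w := by
      rcases hp R i hi h with h1 | h2
      · left
        apply ha
        rw [← hw, ← h1, hv]
      · right
        rw [hpref, hv, hw] at h2
        exact (NS.prefR_a ha (NS.Q 3) 3 w).mp h2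
    fin_cases w
    · exact absurd hd (by decide)
    · exact absurd hd (by decide)
    · exact absurd hd (by decide)
    · exact L10 (R.erase i h) hR2 hw
  have L12 : ∀ R : Profile V A, NS.Rep enc a (![2,0,0,3,0,0,2,0,0,3,0,0,2] : Fin 13 → ℕ) R → f R ≠ a 3 := by
    intro R hR hv
    obtain ⟨i, hi, h, hpref, hR2⟩ := NS.rep_erase (c' := (![2,0,0,2,0,0,2,0,0,3,0,0,2] : Fin 13 → ℕ)) hR 3 (by decide) (by decide)
    obtain ⟨w, hw⟩ := hrange (![2,0,0,2,0,0,2,0,0,3,0,0,2] : Fin 13 → ℕ) (R.erase i h) (by decide) hR2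
    have hd : w = 3 ∨ NS.Q 3 3 < NS.Q 3 w := by
      rcases hp R i hi h with h1 | h2
      · left
        apply ha
        rw [← hw, ← h1, hv]
      · right
        rw [hpref, hv, hw] at h2
        exact (NS.prefR_a ha (NS.Q 3) 3 w).mp h2
    fin_cases w
    · exact absurd hd (by decide)
    · exact absurd hd (by decide)
    · exact absurd hd (by decide)
    · exact L11 (R.erase i h) hR2 hw
  have L13 : ∀ R : Profile V A, NS.Rep enc a (![2,0,0,3,0,0,2,0,0,3,0,0,1] : Fin 13 → ℕ) R → f R ≠ a 0 := by
    intro R hR hv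
    obtain ⟨R', i, hi, h, heq, hpref, hR'⟩ := NS.rep_add (c' := (![2,0,0,3,0,0,2,0,0,3,0,0,2] : Fin 13 → ℕ)) henc ha hR 12 (by decide) (by decide) hn
    obtain ⟨w, hw⟩ := hrange (![2,0,0,3,0,0,2,0,0,3,0,0,2] : Fin 13 → ℕ) R' (by decide) hR'
    have hd : w = 0 ∨ NS.Q 12 w < NS.Q 12 0 := by
      rcases hp R' i hi h with h1 | h2
      · left
        apply ha
        rw [← hw, h1, heq, hv]
      · right
        rw [hpref, heq, hv, hw] at h2
        exact (NS.prefR_a ha (NS.Q 12) w 0).mp h2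
    fin_cases w
    · exact L8 R' hR' hw
    · exact absurd hd (by decide)
    · exact absurd hd (by decide)
    · exact L12 R' hR' hw
  have L14 : ∀ R : Profile V A, NS.Rep enc a (![2,0,0,0,0,0,2,0,1,3,0,0,1] : Fin 13 → ℕ) R → f R ≠ a 3 := by
    intro R hR hv
    have hw := hf R (a 2) (NS.cond_count ha hR 2 (by decide) (by decide))
    have hvw : a (3 : Fin 4) = a 2 := by rw [← hv, hw]
    exact absurd (ha hvw) (by decide)
  have L15 : ∀ R : Profile V A, NS.Rep enc a (![2,0,0,0,0,0,2,0,0,3,0,0,1] : Fin 13 → ℕ) R → f R ≠ a 3 := by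
    intro R hR hv
    obtain ⟨R', i, hi, h, heq, hpref, hR'⟩ := NS.rep_add (c' := (![2,0,0,0,0,0,2,0,1,3,0,0,1] : Fin 13 → ℕ)) henc ha hR 8 (by decide) (by decide) hn
    obtain ⟨w, hw⟩ := hrange (![2,0,0,0,0,0,2,0,1,3,0,0,1] : Fin 13 → ℕ) R' (by decide) hR'
    have hd : w = 3 ∨ NS.Q 8 w < NS.Q 8 3 := by
      rcases hp R' i hi h with h1 | h2
      · left
        apply ha
        rw [← hw, h1, heq, hv]
      · right
        rw [hpref, heq, hv, hw] at h2
        exact (NS.prefR_a ha (NS.Q 8) w 3).mp h2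
    fin_cases w
    · exact absurd hd (by decide)
    · exact absurd hd (by decide)
    · exact absurd hd (by decide)
    · exact L14 R' hR' hw
  have L16 : ∀ R : Profile V A, NS.Rep enc a (![2,0,0,1,0,0,2,0,0,3,0,0,1] : Fin 13 → ℕ) R → f R ≠ a 3 := by
    intro R hR hv
    obtain ⟨i, hi, h, hpref, hR2⟩ := NS.rep_erase (c' := (![2,0,0,0,0,0,2,0,0,3,0,0,1] : Fin 13 → ℕ)) hR 3 (by decide) (by decide)
    obtain ⟨w, hw⟩ := hrange (![2,0,0,0,0,0,2,0,0,3,0,0,1] : Fin 13 → ℕ) (R.erase i h) (by decide) hR2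
    have hd : w = 3 ∨ NS.Q 3 3 < NS.Q 3 w := by
      rcases hp R i hi h with h1 | h2
      · left
        apply ha
        rw [← hw, ← h1, hv]
      · right
        rw [hpref, hv, hw] at h2
        exact (NS.prefR_a ha (NS.Q 3) 3 w).mp h2
    fin_cases w
    · exact absurd hd (by decide)
    · exact absurd hd (by decide)
    · exact absurd hd (by decide)
    · exact L15 (R.erase i h) hR2 hw
  have L17 : ∀ R : Profile V A, NS.Rep enc a (![2,0,0,2,0,0,2,0,0,3,0,0,1] : Fin 13 → ℕ) R → f R ≠ a 3 := by
    intro R hR hv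
    obtain ⟨i, hi, h, hpref, hR2⟩ := NS.rep_erase (c' := (![2,0,0,1,0,0,2,0,0,3,0,0,1] : Fin 13 → ℕ)) hR 3 (by decide) (by decide)
    obtain ⟨w, hw⟩ := hrange (![2,0,0,1,0,0,2,0,0,3,0,0,1] : Fin 13 → ℕ) (R.erase i h) (by decide) hR2
    have hd : w = 3 ∨ NS.Q 3 3 < NS.Q 3 w := by
      rcases hp R i hi h with h1 | h2
      · left
        apply ha
        rw [← hw, ← h1, hv]
      · right
        rw [hpref, hv, hw] at h2
        exact (NS.prefR_a ha (NS.Q 3) 3 w).mp h2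
    fin_cases w
    · exact absurd hd (by decide)
    · exact absurd hd (by decide)
    · exact absurd hd (by decide)
    · exact L16 (R.erase i h) hR2 hw
  have L18 : ∀ R : Profile V A, NS.Rep enc a (![2,0,0,3,0,0,2,0,0,3,0,0,1] : Fin 13 → ℕ) R → f R ≠ a 3 := by
    intro R hR hv
    obtain ⟨i, hi, h, hpref, hR2⟩ := NS.rep_erase (c' := (![2,0,0,2,0,0,2,0,0,3,0,0,1] : Fin 13 → ℕ)) hR 3 (by decide) (by decide)
    obtain ⟨w, hw⟩ := hrange (![2,0,0,2,0,0,2,0,0,3,0,0,1] : Fin 13 → ℕ) (R.erase i h) (by decide) hR2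
    have hd : w = 3 ∨ NS.Q 3 3 < NS.Q 3 w := by
      rcases hp R i hi h with h1 | h2
      · left
        apply ha
        rw [← hw, ← h1, hv]
      · right
        rw [hpref, hv, hw] at h2
        exact (NS.prefR_a ha (NS.Q 3) 3 w).mp h2
    fin_cases w
    · exact absurd hd (by decide)
    · exact absurd hd (by decide)
    · exact absurd hd (by decide)
    · exact L17 (R.erase i h) hR2 hw
  have L19 : ∀ R : Profile V A, NS.Rep enc a (![2,0,0,3,0,0,2,1,0,3,0,0,1] : Fin 13 → ℕ) R → f R ≠ a 0 := by
    intro R hR hv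
    obtain ⟨i, hi, h, hpref, hR2⟩ := NS.rep_erase (c' := (![2,0,0,3,0,0,2,0,0,3,0,0,1] : Fin 13 → ℕ)) hR 7 (by decide) (by decide)
    obtain ⟨w, hw⟩ := hrange (![2,0,0,3,0,0,2,0,0,3,0,0,1] : Fin 13 → ℕ) (R.erase i h) (by decide) hR2
    have hd : w = 0 ∨ NS.Q 7 0 < NS.Q 7 w := by
      rcases hp R i hi h with h1 | h2
      · left
        apply ha
        rw [← hw, ← h1, hv]
      · right
        rw [hpref, hv, hw] at h2
        exact (NS.prefR_a ha (NS.Q 7) 0 w).mp h2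
    fin_cases w
    · exact L13 (R.erase i h) hR2 hw
    · exact absurd hd (by decide)
    · exact absurd hd (by decide)
    · exact L18 (R.erase i h) hR2 hw
  have L20 : ∀ R : Profile V A, NS.Rep enc a (![2,0,0,3,0,0,2,2,0,0,0,0,0] : Fin 13 → ℕ) R → f R ≠ a 1 := by
    intro R hR hv
    have hw := hf R (a 0) (NS.cond_count ha hR 0 (by decide) (by decide))
    have hvw : a (1 : Fin 4) = a 0 := by rw [← hv, hw]
    exact absurd (ha hvw) (by decide)
  have L21 : ∀ R : Profile V A, NS.Rep enc a (![2,0,0,3,0,0,2,1,0,0,0,0,0] : Fin 13 → ℕ) R → f R ≠ a 1 := by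
    intro R hR hv
    obtain ⟨R', i, hi, h, heq, hpref, hR'⟩ := NS.rep_add (c' := (![2,0,0,3,0,0,2,2,0,0,0,0,0] : Fin 13 → ℕ)) henc ha hR 7 (by decide) (by decide) hn
    obtain ⟨w, hw⟩ := hrange (![2,0,0,3,0,0,2,2,0,0,0,0,0] : Fin 13 → ℕ) R' (by decide) hR'
    have hd : w = 1 ∨ NS.Q 7 w < NS.Q 7 1 := by
      rcases hp R' i hi h with h1 | h2
      · left
        apply ha
        rw [← hw, h1, heq, hv]
      · right
        rw [hpref, heq, hv, hw] at h2
        exact (NS.prefR_a ha (NS.Q 7) w 1).mp h2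
    fin_cases w
    · exact absurd hd (by decide)
    · exact L20 R' hR' hw
    · exact absurd hd (by decide)
    · exact absurd hd (by decide)
  have L22 : ∀ R : Profile V A, NS.Rep enc a (![2,0,0,3,0,0,2,1,0,0,0,0,1] : Fin 13 → ℕ) R → f R ≠ a 1 := by
    intro R hR hv
    obtain ⟨i, hi, h, hpref, hR2⟩ := NS.rep_erase (c' := (![2,0,0,3,0,0,2,1,0,0,0,0,0] : Fin 13 → ℕ)) hR 12 (by decide) (by decide)
    obtain ⟨w, hw⟩ := hrange (![2,0,0,3,0,0,2,1,0,0,0,0,0] : Fin 13 → ℕ) (R.erase i h) (by decide) hR2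
    have hd : w = 1 ∨ NS.Q 12 1 < NS.Q 12 w := by
      rcases hp R i hi h with h1 | h2
      · left
        apply ha
        rw [← hw, ← h1, hv]
      · right
        rw [hpref, hv, hw] at h2
        exact (NS.prefR_a ha (NS.Q 12) 1 w).mp h2
    fin_cases w
    · exact absurd hd (by decide)
    · exact L21 (R.erase i h) hR2 hw
    · exact absurd hd (by decide)
    · exact absurd hd (by decide)
  have L23 : ∀ R : Profile V A, NS.Rep enc a (![2,0,0,3,0,0,2,1,0,1,0,0,1] : Fin 13 → ℕ) R → f R ≠ a 1 := by
    intro R hR hv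
    obtain ⟨i, hi, h, hpref, hR2⟩ := NS.rep_erase (c' := (![2,0,0,3,0,0,2,1,0,0,0,0,1] : Fin 13 → ℕ)) hR 9 (by decide) (by decide)
    obtain ⟨w, hw⟩ := hrange (![2,0,0,3,0,0,2,1,0,0,0,0,1] : Fin 13 → ℕ) (R.erase i h) (by decide) hR2
    have hd : w = 1 ∨ NS.Q 9 1 < NS.Q 9 w := by
      rcases hp R i hi h with h1 | h2
      · left
        apply ha
        rw [← hw, ← h1, hv]
      · right
        rw [hpref, hv, hw] at h2
        exact (NS.prefR_a ha (NS.Q 9) 1 w).mp h2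
    fin_cases w
    · exact absurd hd (by decide)
    · exact L22 (R.erase i h) hR2 hw
    · exact absurd hd (by decide)
    · exact absurd hd (by decide)
  have L24 : ∀ R : Profile V A, NS.Rep enc a (![2,0,0,3,0,0,2,1,0,2,0,0,1] : Fin 13 → ℕ) R → f R ≠ a 1 := by
    intro R hR hv
    obtain ⟨i, hi, h, hpref, hR2⟩ := NS.rep_erase (c' := (![2,0,0,3,0,0,2,1,0,1,0,0,1] : Fin 13 → ℕ)) hR 9 (by decide) (by decide)
    obtain ⟨w, hw⟩ := hrange (![2,0,0,3,0,0,2,1,0,1,0,0,1] : Fin 13 → ℕ) (R.erase i h) (by decide) hR2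
    have hd : w = 1 ∨ NS.Q 9 1 < NS.Q 9 w := by
      rcases hp R i hi h with h1 | h2
      · left
        apply ha
        rw [← hw, ← h1, hv]
      · right
        rw [hpref, hv, hw] at h2
        exact (NS.prefR_a ha (NS.Q 9) 1 w).mp h2
    fin_cases w
    · exact absurd hd (by decide)
    · exact L23 (R.erase i h) hR2 hw
    · exact absurd hd (by decide)
    · exact absurd hd (by decide)
  have L25 : ∀ R : Profile V A, NS.Rep enc a (![2,0,0,3,0,0,2,1,0,3,0,0,1] : Fin 13 → ℕ) R → f R ≠ a 1 := by
    intro R hR hv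
    obtain ⟨i, hi, h, hpref, hR2⟩ := NS.rep_erase (c' := (![2,0,0,3,0,0,2,1,0,2,0,0,1] : Fin 13 → ℕ)) hR 9 (by decide) (by decide)
    obtain ⟨w, hw⟩ := hrange (![2,0,0,3,0,0,2,1,0,2,0,0,1] : Fin 13 → ℕ) (R.erase i h) (by decide) hR2
    have hd : w = 1 ∨ NS.Q 9 1 < NS.Q 9 w := by
      rcases hp R i hi h with h1 | h2
      · left
        apply ha
        rw [← hw, ← h1, hv]
      · right
        rw [hpref, hv, hw] at h2
        exact (NS.prefR_a ha (NS.Q 9) 1 w).mp h2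
    fin_cases w
    · exact absurd hd (by decide)
    · exact L24 (R.erase i h) hR2 hw
    · exact absurd hd (by decide)
    · exact absurd hd (by decide)
  have L26 : ∀ R : Profile V A, NS.Rep enc a (![2,0,0,3,0,0,2,1,0,1,0,0,0] : Fin 13 → ℕ) R → f R ≠ a 1 := by
    intro R hR hv
    obtain ⟨i, hi, h, hpref, hR2⟩ := NS.rep_erase (c' := (![2,0,0,3,0,0,2,1,0,0,0,0,0] : Fin 13 → ℕ)) hR 9 (by decide) (by decide)
    obtain ⟨w, hw⟩ := hrange (![2,0,0,3,0,0,2,1,0,0,0,0,0] : Fin 13 → ℕ) (R.erase i h) (by decide) hR2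
    have hd : w = 1 ∨ NS.Q 9 1 < NS.Q 9 w := by
      rcases hp R i hi h with h1 | h2
      · left
        apply ha
        rw [← hw, ← h1, hv]
      · right
        rw [hpref, hv, hw] at h2
        exact (NS.prefR_a ha (NS.Q 9) 1 w).mp h2
    fin_cases w
    · exact absurd hd (by decide)
    · exact L21 (R.erase i h) hR2 hw
    · exact absurd hd (by decide)
    · exact absurd hd (by decide)
  have L27 : ∀ R : Profile V A, NS.Rep enc a (![2,0,0,3,0,0,2,1,0,2,0,0,0] : Fin 13 → ℕ) R → f R ≠ a 1 := by
    intro R hR hv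
    obtain ⟨i, hi, h, hpref, hR2⟩ := NS.rep_erase (c' := (![2,0,0,3,0,0,2,1,0,1,0,0,0] : Fin 13 → ℕ)) hR 9 (by decide) (by decide)
    obtain ⟨w, hw⟩ := hrange (![2,0,0,3,0,0,2,1,0,1,0,0,0] : Fin 13 → ℕ) (R.erase i h) (by decide) hR2
    have hd : w = 1 ∨ NS.Q 9 1 < NS.Q 9 w := by
      rcases hp R i hi h with h1 | h2
      · left
        apply ha
        rw [← hw, ← h1, hv]
      · right
        rw [hpref, hv, hw] at h2
        exact (NS.prefR_a ha (NS.Q 9) 1 w).mp h2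
    fin_cases w
    · exact absurd hd (by decide)
    · exact L26 (R.erase i h) hR2 hw
    · exact absurd hd (by decide)
    · exact absurd hd (by decide)
  have L28 : ∀ R : Profile V A, NS.Rep enc a (![2,0,0,3,0,0,2,1,0,3,0,0,0] : Fin 13 → ℕ) R → f R ≠ a 1 := by
    intro R hR hv
    obtain ⟨i, hi, h, hpref, hR2⟩ := NS.rep_erase (c' := (![2,0,0,3,0,0,2,1,0,2,0,0,0] : Fin 13 → ℕ)) hR 9 (by decide) (by decide)
    obtain ⟨w, hw⟩ := hrange (![2,0,0,3,0,0,2,1,0,2,0,0,0] : Fin 13 → ℕ) (R.erase i h) (by decide) hR2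
    have hd : w = 1 ∨ NS.Q 9 1 < NS.Q 9 w := by
      rcases hp R i hi h with h1 | h2
      · left
        apply ha
        rw [← hw, ← h1, hv]
      · right
        rw [hpref, hv, hw] at h2
        exact (NS.prefR_a ha (NS.Q 9) 1 w).mp h2
    fin_cases w
    · exact absurd hd (by decide)
    · exact L27 (R.erase i h) hR2 hw
    · exact absurd hd (by decide)
    · exact absurd hd (by decide)
  have L29 : ∀ R : Profile V A, NS.Rep enc a (![2,0,0,3,0,0,2,2,0,1,0,0,0] : Fin 13 → ℕ) R → f R ≠ a 1 := by
    intro R hR hv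
    obtain ⟨i, hi, h, hpref, hR2⟩ := NS.rep_erase (c' := (![2,0,0,3,0,0,2,2,0,0,0,0,0] : Fin 13 → ℕ)) hR 9 (by decide) (by decide)
    obtain ⟨w, hw⟩ := hrange (![2,0,0,3,0,0,2,2,0,0,0,0,0] : Fin 13 → ℕ) (R.erase i h) (by decide) hR2
    have hd : w = 1 ∨ NS.Q 9 1 < NS.Q 9 w := by
      rcases hp R i hi h with h1 | h2
      · left
        apply ha
        rw [← hw, ← h1, hv]
      · right
        rw [hpref, hv, hw] at h2
        exact (NS.prefR_a ha (NS.Q 9) 1 w).mp h2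
    fin_cases w
    · exact absurd hd (by decide)
    · exact L20 (R.erase i h) hR2 hw
    · exact absurd hd (by decide)
    · exact absurd hd (by decide)
  have L30 : ∀ R : Profile V A, NS.Rep enc a (![2,0,0,3,0,0,2,2,0,2,0,0,0] : Fin 13 → ℕ) R → f R ≠ a 1 := by
    intro R hR hv
    obtain ⟨i, hi, h, hpref, hR2⟩ := NS.rep_erase (c' := (![2,0,0,3,0,0,2,2,0,1,0,0,0] : Fin 13 → ℕ)) hR 9 (by decide) (by decide)
    obtain ⟨w, hw⟩ := hrange (![2,0,0,3,0,0,2,2,0,1,0,0,0] : Fin 13 → ℕ) (R.erase i h) (by decide) hR2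
    have hd : w = 1 ∨ NS.Q 9 1 < NS.Q 9 w := by
      rcases hp R i hi h with h1 | h2
      · left
        apply ha
        rw [← hw, ← h1, hv]
      · right
        rw [hpref, hv, hw] at h2
        exact (NS.prefR_a ha (NS.Q 9) 1 w).mp h2
    fin_cases w
    · exact absurd hd (by decide)
    · exact L29 (R.erase i h) hR2 hw
    · exact absurd hd (by decide)
    · exact absurd hd (by decide)
  have L31 : ∀ R : Profile V A, NS.Rep enc a (![2,0,0,3,0,0,2,2,0,3,0,0,0] : Fin 13 → ℕ) R → f R ≠ a 1 := by
    intro R hR hv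
    obtain ⟨i, hi, h, hpref, hR2⟩ := NS.rep_erase (c' := (![2,0,0,3,0,0,2,2,0,2,0,0,0] : Fin 13 → ℕ)) hR 9 (by decide) (by decide)
    obtain ⟨w, hw⟩ := hrange (![2,0,0,3,0,0,2,2,0,2,0,0,0] : Fin 13 → ℕ) (R.erase i h) (by decide) hR2
    have hd : w = 1 ∨ NS.Q 9 1 < NS.Q 9 w := by
      rcases hp R i hi h with h1 | h2
      · left
        apply ha
        rw [← hw, ← h1, hv]
      · right
        rw [hpref, hv, hw] at h2
        exact (NS.prefR_a ha (NS.Q 9) 1 w).mp h2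
    fin_cases w
    · exact absurd hd (by decide)
    · exact L30 (R.erase i h) hR2 hw
    · exact absurd hd (by decide)
    · exact absurd hd (by decide)
  have L32 : ∀ R : Profile V A, NS.Rep enc a (![0,0,0,0,0,0,2,2,0,3,0,0,0] : Fin 13 → ℕ) R → f R ≠ a 2 := by
    intro R hR hv
    have hw := hf R (a 1) (NS.cond_count ha hR 1 (by decide) (by decide))
    have hvw : a (2 : Fin 4) = a 1 := by rw [← hv, hw]
    exact absurd (ha hvw) (by decide)
  have L33 : ∀ R : Profile V A, NS.Rep enc a (![0,0,0,0,0,0,2,2,0,3,0,0,0] : Fin 13 → ℕ) R → f R ≠ a 3 := by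
    intro R hR hv
    have hw := hf R (a 1) (NS.cond_count ha hR 1 (by decide) (by decide))
    have hvw : a (3 : Fin 4) = a 1 := by rw [← hv, hw]
    exact absurd (ha hvw) (by decide)
  have L34 : ∀ R : Profile V A, NS.Rep enc a (![0,0,0,1,0,0,2,2,0,3,0,0,0] : Fin 13 → ℕ) R → f R ≠ a 2 := by
    intro R hR hv
    obtain ⟨i, hi, h, hpref, hR2⟩ := NS.rep_erase (c' := (![0,0,0,0,0,0,2,2,0,3,0,0,0] : Fin 13 → ℕ)) hR 3 (by decide) (by decide)
    obtain ⟨w, hw⟩ := hrange (![0,0,0,0,0,0,2,2,0,3,0,0,0] : Fin 13 → ℕ) (R.erase i h) (by decide) hR2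
    have hd : w = 2 ∨ NS.Q 3 2 < NS.Q 3 w := by
      rcases hp R i hi h with h1 | h2
      · left
        apply ha
        rw [← hw, ← h1, hv]
      · right
        rw [hpref, hv, hw] at h2
        exact (NS.prefR_a ha (NS.Q 3) 2 w).mp h2
    fin_cases w
    · exact absurd hd (by decide)
    · exact absurd hd (by decide)
    · exact L32 (R.erase i h) hR2 hw
    · exact L33 (R.erase i h) hR2 hw
  have L35 : ∀ R : Profile V A, NS.Rep enc a (![0,0,0,1,1,0,2,2,0,3,0,0,0] : Fin 13 → ℕ) R → f R ≠ a 3 := by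
    intro R hR hv
    have hw := hf R (a 1) (NS.cond_count ha hR 1 (by decide) (by decide))
    have hvw : a (3 : Fin 4) = a 1 := by rw [← hv, hw]
    exact absurd (ha hvw) (by decide)
  have L36 : ∀ R : Profile V A, NS.Rep enc a (![0,0,0,1,0,0,2,2,0,3,0,0,0] : Fin 13 → ℕ) R → f R ≠ a 3 := by
    intro R hR hv
    obtain ⟨R', i, hi, h, heq, hpref, hR'⟩ := NS.rep_add (c' := (![0,0,0,1,1,0,2,2,0,3,0,0,0] : Fin 13 → ℕ)) henc ha hR 4 (by decide) (by decide) hn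
    obtain ⟨w, hw⟩ := hrange (![0,0,0,1,1,0,2,2,0,3,0,0,0] : Fin 13 → ℕ) R' (by decide) hR'
    have hd : w = 3 ∨ NS.Q 4 w < NS.Q 4 3 := by
      rcases hp R' i hi h with h1 | h2
      · left
        apply ha
        rw [← hw, h1, heq, hv]
      · right
        rw [hpref, heq, hv, hw] at h2
        exact (NS.prefR_a ha (NS.Q 4) w 3).mp h2
    fin_cases w
    · exact absurd hd (by decide)
    · exact absurd hd (by decide)
    · exact absurd hd (by decide)
    · exact L35 R' hR' hw
  have L37 : ∀ R : Profile V A, NS.Rep enc a (![0,0,0,2,0,0,2,2,0,3,0,0,0] : Fin 13 → ℕ) R → f R ≠ a 2 := by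
    intro R hR hv
    obtain ⟨i, hi, h, hpref, hR2⟩ := NS.rep_erase (c' := (![0,0,0,1,0,0,2,2,0,3,0,0,0] : Fin 13 → ℕ)) hR 3 (by decide) (by decide)
    obtain ⟨w, hw⟩ := hrange (![0,0,0,1,0,0,2,2,0,3,0,0,0] : Fin 13 → ℕ) (R.erase i h) (by decide) hR2
    have hd : w = 2 ∨ NS.Q 3 2 < NS.Q 3 w := by
      rcases hp R i hi h with h1 | h2
      · left
        apply ha
        rw [← hw, ← h1, hv]
      · right
        rw [hpref, hv, hw] at h2
        exact (NS.prefR_a ha (NS.Q 3) 2 w).mp h2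
    fin_cases w
    · exact absurd hd (by decide)
    · exact absurd hd (by decide)
    · exact L34 (R.erase i h) hR2 hw
    · exact L36 (R.erase i h) hR2 hw
  have L38 : ∀ R : Profile V A, NS.Rep enc a (![0,0,0,2,0,0,2,2,0,3,0,0,0] : Fin 13 → ℕ) R → f R ≠ a 3 := by
    intro R hR hv
    obtain ⟨i, hi, h, hpref, hR2⟩ := NS.rep_erase (c' := (![0,0,0,1,0,0,2,2,0,3,0,0,0] : Fin 13 → ℕ)) hR 3 (by decide) (by decide)
    obtain ⟨w, hw⟩ := hrange (![0,0,0,1,0,0,2,2,0,3,0,0,0] : Fin 13 → ℕ) (R.erase i h) (by decide) hR2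
    have hd : w = 3 ∨ NS.Q 3 3 < NS.Q 3 w := by
      rcases hp R i hi h with h1 | h2
      · left
        apply ha
        rw [← hw, ← h1, hv]
      · right
        rw [hpref, hv, hw] at h2
        exact (NS.prefR_a ha (NS.Q 3) 3 w).mp h2
    fin_cases w
    · exact absurd hd (by decide)
    · exact absurd hd (by decide)
    · exact absurd hd (by decide)
    · exact L36 (R.erase i h) hR2 hw
  have L39 : ∀ R : Profile V A, NS.Rep enc a (![0,0,0,3,0,0,2,2,0,3,0,0,0] : Fin 13 → ℕ) R → f R ≠ a 2 := by
    intro R hR hv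
    obtain ⟨i, hi, h, hpref, hR2⟩ := NS.rep_erase (c' := (![0,0,0,2,0,0,2,2,0,3,0,0,0] : Fin 13 → ℕ)) hR 3 (by decide) (by decide)
    obtain ⟨w, hw⟩ := hrange (![0,0,0,2,0,0,2,2,0,3,0,0,0] : Fin 13 → ℕ) (R.erase i h) (by decide) hR2
    have hd : w = 2 ∨ NS.Q 3 2 < NS.Q 3 w := by
      rcases hp R i hi h with h1 | h2
      · left
        apply ha
        rw [← hw, ← h1, hv]
      · right
        rw [hpref, hv, hw] at h2
        exact (NS.prefR_a ha (NS.Q 3) 2 w).mp h2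
    fin_cases w
    · exact absurd hd (by decide)
    · exact absurd hd (by decide)
    · exact L37 (R.erase i h) hR2 hw
    · exact L38 (R.erase i h) hR2 hw
  have L40 : ∀ R : Profile V A, NS.Rep enc a (![1,0,0,3,0,0,2,2,0,3,0,0,0] : Fin 13 → ℕ) R → f R ≠ a 2 := by
    intro R hR hv
    obtain ⟨i, hi, h, hpref, hR2⟩ := NS.rep_erase (c' := (![0,0,0,3,0,0,2,2,0,3,0,0,0] : Fin 13 → ℕ)) hR 0 (by decide) (by decide)
    obtain ⟨w, hw⟩ := hrange (![0,0,0,3,0,0,2,2,0,3,0,0,0] : Fin 13 → ℕ) (R.erase i h) (by decide) hR2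
    have hd : w = 2 ∨ NS.Q 0 2 < NS.Q 0 w := by
      rcases hp R i hi h with h1 | h2
      · left
        apply ha
        rw [← hw, ← h1, hv]
      · right
        rw [hpref, hv, hw] at h2
        exact (NS.prefR_a ha (NS.Q 0) 2 w).mp h2
    fin_cases w
    · exact absurd hd (by decide)
    · exact absurd hd (by decide)
    · exact L39 (R.erase i h) hR2 hw
    · exact absurd hd (by decide)
  have L41 : ∀ R : Profile V A, NS.Rep enc a (![2,0,0,3,0,0,2,2,0,3,0,0,0] : Fin 13 → ℕ) R → f R ≠ a 2 := by
    intro R hR hv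
    obtain ⟨i, hi, h, hpref, hR2⟩ := NS.rep_erase (c' := (![1,0,0,3,0,0,2,2,0,3,0,0,0] : Fin 13 → ℕ)) hR 0 (by decide) (by decide)
    obtain ⟨w, hw⟩ := hrange (![1,0,0,3,0,0,2,2,0,3,0,0,0] : Fin 13 → ℕ) (R.erase i h) (by decide) hR2
    have hd : w = 2 ∨ NS.Q 0 2 < NS.Q 0 w := by
      rcases hp R i hi h with h1 | h2
      · left
        apply ha
        rw [← hw, ← h1, hv]
      · right
        rw [hpref, hv, hw] at h2
        exact (NS.prefR_a ha (NS.Q 0) 2 w).mp h2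
    fin_cases w
    · exact absurd hd (by decide)
    · exact absurd hd (by decide)
    · exact L40 (R.erase i h) hR2 hw
    · exact absurd hd (by decide)
  have L42 : ∀ R : Profile V A, NS.Rep enc a (![2,0,0,3,0,0,2,1,0,3,0,0,0] : Fin 13 → ℕ) R → f R ≠ a 2 := by
    intro R hR hv
    obtain ⟨R', i, hi, h, heq, hpref, hR'⟩ := NS.rep_add (c' := (![2,0,0,3,0,0,2,2,0,3,0,0,0] : Fin 13 → ℕ)) henc ha hR 7 (by decide) (by decide) hn
    obtain ⟨w, hw⟩ := hrange (![2,0,0,3,0,0,2,2,0,3,0,0,0] : Fin 13 → ℕ) R' (by decide) hR'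
    have hd : w = 2 ∨ NS.Q 7 w < NS.Q 7 2 := by
      rcases hp R' i hi h with h1 | h2
      · left
        apply ha
        rw [← hw, h1, heq, hv]
      · right
        rw [hpref, heq, hv, hw] at h2
        exact (NS.prefR_a ha (NS.Q 7) w 2).mp h2
    fin_cases w
    · exact absurd hd (by decide)
    · exact L31 R' hR' hw
    · exact L41 R' hR' hw
    · exact absurd hd (by decide)
  have L43 : ∀ R : Profile V A, NS.Rep enc a (![2,0,0,3,0,0,2,1,0,3,0,0,1] : Fin 13 → ℕ) R → f R ≠ a 2 := by
    intro R hR hv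
    obtain ⟨i, hi, h, hpref, hR2⟩ := NS.rep_erase (c' := (![2,0,0,3,0,0,2,1,0,3,0,0,0] : Fin 13 → ℕ)) hR 12 (by decide) (by decide)
    obtain ⟨w, hw⟩ := hrange (![2,0,0,3,0,0,2,1,0,3,0,0,0] : Fin 13 → ℕ) (R.erase i h) (by decide) hR2
    have hd : w = 2 ∨ NS.Q 12 2 < NS.Q 12 w := by
      rcases hp R i hi h with h1 | h2
      · left
        apply ha
        rw [← hw, ← h1, hv]
      · right
        rw [hpref, hv, hw] at h2
        exact (NS.prefR_a ha (NS.Q 12) 2 w).mp h2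
    fin_cases w
    · exact absurd hd (by decide)
    · exact L28 (R.erase i h) hR2 hw
    · exact L42 (R.erase i h) hR2 hw
    · exact absurd hd (by decide)
  have L44 : ∀ R : Profile V A, NS.Rep enc a (![2,0,0,0,0,0,2,1,0,3,0,0,1] : Fin 13 → ℕ) R → f R ≠ a 3 := by
    intro R hR hv
    obtain ⟨i, hi, h, hpref, hR2⟩ := NS.rep_erase (c' := (![2,0,0,0,0,0,2,0,0,3,0,0,1] : Fin 13 → ℕ)) hR 7 (by decide) (by decide)
    obtain ⟨w, hw⟩ := hrange (![2,0,0,0,0,0,2,0,0,3,0,0,1] : Fin 13 → ℕ) (R.erase i h) (by decide) hR2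
    have hd : w = 3 ∨ NS.Q 7 3 < NS.Q 7 w := by
      rcases hp R i hi h with h1 | h2
      · left
        apply ha
        rw [← hw, ← h1, hv]
      · right
        rw [hpref, hv, hw] at h2
        exact (NS.prefR_a ha (NS.Q 7) 3 w).mp h2
    fin_cases w
    · exact absurd hd (by decide)
    · exact absurd hd (by decide)
    · exact absurd hd (by decide)
    · exact L15 (R.erase i h) hR2 hw
  have L45 : ∀ R : Profile V A, NS.Rep enc a (![2,0,0,1,0,0,2,1,0,3,0,0,1] : Fin 13 → ℕ) R → f R ≠ a 3 := by
    intro R hR hv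
    obtain ⟨i, hi, h, hpref, hR2⟩ := NS.rep_erase (c' := (![2,0,0,0,0,0,2,1,0,3,0,0,1] : Fin 13 → ℕ)) hR 3 (by decide) (by decide)
    obtain ⟨w, hw⟩ := hrange (![2,0,0,0,0,0,2,1,0,3,0,0,1] : Fin 13 → ℕ) (R.erase i h) (by decide) hR2
    have hd : w = 3 ∨ NS.Q 3 3 < NS.Q 3 w := by
      rcases hp R i hi h with h1 | h2
      · left
        apply ha
        rw [← hw, ← h1, hv]
      · right
        rw [hpref, hv, hw] at h2
        exact (NS.prefR_a ha (NS.Q 3) 3 w).mp h2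
    fin_cases w
    · exact absurd hd (by decide)
    · exact absurd hd (by decide)
    · exact absurd hd (by decide)
    · exact L44 (R.erase i h) hR2 hw
  have L46 : ∀ R : Profile V A, NS.Rep enc a (![2,0,0,2,0,0,2,1,0,3,0,0,1] : Fin 13 → ℕ) R → f R ≠ a 3 := by
    intro R hR hv
    obtain ⟨i, hi, h, hpref, hR2⟩ := NS.rep_erase (c' := (![2,0,0,1,0,0,2,1,0,3,0,0,1] : Fin 13 → ℕ)) hR 3 (by decide) (by decide)
    obtain ⟨w, hw⟩ := hrange (![2,0,0,1,0,0,2,1,0,3,0,0,1] : Fin 13 → ℕ) (R.erase i h) (by decide) hR2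
    have hd : w = 3 ∨ NS.Q 3 3 < NS.Q 3 w := by
      rcases hp R i hi h with h1 | h2
      · left
        apply ha
        rw [← hw, ← h1, hv]
      · right
        rw [hpref, hv, hw] at h2
        exact (NS.prefR_a ha (NS.Q 3) 3 w).mp h2
    fin_cases w
    · exact absurd hd (by decide)
    · exact absurd hd (by decide)
    · exact absurd hd (by decide)
    · exact L45 (R.erase i h) hR2 hw
  have L47 : ∀ R : Profile V A, NS.Rep enc a (![2,0,0,3,0,0,2,1,0,3,0,0,1] : Fin 13 → ℕ) R → f R ≠ a 3 := by
    intro R hR hv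
    obtain ⟨i, hi, h, hpref, hR2⟩ := NS.rep_erase (c' := (![2,0,0,2,0,0,2,1,0,3,0,0,1] : Fin 13 → ℕ)) hR 3 (by decide) (by decide)
    obtain ⟨w, hw⟩ := hrange (![2,0,0,2,0,0,2,1,0,3,0,0,1] : Fin 13 → ℕ) (R.erase i h) (by decide) hR2
    have hd : w = 3 ∨ NS.Q 3 3 < NS.Q 3 w := by
      rcases hp R i hi h with h1 | h2
      · left
        apply ha
        rw [← hw, ← h1, hv]
      · right
        rw [hpref, hv, hw] at h2
        exact (NS.prefR_a ha (NS.Q 3) 3 w).mp h2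
    fin_cases w
    · exact absurd hd (by decide)
    · exact absurd hd (by decide)
    · exact absurd hd (by decide)
    · exact L46 (R.erase i h) hR2 hw
  obtain ⟨R, hR⟩ := NS.rep_exists henc ha hn (∑ j, ((![2,0,0,3,0,0,2,1,0,3,0,0,1] : Fin 13 → ℕ)) j)
    (by decide) (by decide) (![2,0,0,3,0,0,2,1,0,3,0,0,1] : Fin 13 → ℕ) rfl
  obtain ⟨w, hw⟩ := hrange (![2,0,0,3,0,0,2,1,0,3,0,0,1] : Fin 13 → ℕ) R (by decide) hR
  fin_cases w
  · exact L19 R hR hw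
  · exact L25 R hR hw
  · exact L43 R hR hw
  · exact L47 R hR hw
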